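/- There is a bijection between symmetric alternative tableaux of size 2n and type B alternative tableaux of size n, obtained by deleting all cells strictly to the right of the main diagonal; it preserves the number of unrestricted rows, and sends the number of non-occupied corners of the symmetric tableau to noc'(T') + 2·noc''(T'), where noc'(T') counts non-occupied diagonal corners of the type B tableau and noc''(T') counts the remaining non-occupied corners. -/

import Mathlib

open Finset Polynomial
open scoped Classical

/-! ### Tree-like tableaux (grid model)
A cell is a pair (row index, column index), both 0-based.  A Ferrers diagram
is a finite lower set of cells.  A tree-like tableau of size `n` is a pair
`(F, P)` where `P` is the set of pointed cells of the diagram `F`. -/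

def IsFerrersGrid (F : Finset (ℕ × ℕ)) : Prop :=
  ∀ p ∈ F, ∀ i j : ℕ, i ≤ p.1 → j ≤ p.2 → (i, j) ∈ F

def IsTLT (F P : Finset (ℕ × ℕ)) : Prop :=
  F.Nonempty ∧ IsFerrersGrid F ∧ P ⊆ F ∧ (0, 0) ∈ P ∧
  (∀ p ∈ P, p ≠ (0, 0) →
    Xor' (∃ i < p.1, (i, p.2) ∈ P) (∃ j < p.2, (p.1, j) ∈ P)) ∧
  (∀ p ∈ F, ∃ q ∈ P, q.1 = p.1) ∧
  (∀ p ∈ F, ∃ q ∈ P, q.2 = p.2)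

/-- The finite set of tree-like tableaux of size `n`. -/
noncomputable def TLT (n : ℕ) : Finset (Finset (ℕ × ℕ) × Finset (ℕ × ℕ)) :=
  ((Finset.range n ×ˢ Finset.range n).powerset ×ˢ
    (Finset.range n ×ˢ Finset.range n).powerset).filter
    (fun T => IsTLT T.1 T.2 ∧ T.2.card = n)

/-- number of non-root points in the topmost row -/
noncomputable def topT (P : Finset (ℕ × ℕ)) : ℕ :=
  (P.filter (fun p => p.1 = 0 ∧ p.2 ≠ 0)).card
/-- number of non-root points in the leftmost column -/
noncomputable def leftT (P : Finset (ℕ × ℕ)) : ℕ :=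
  (P.filter (fun p => p.2 = 0 ∧ p.1 ≠ 0)).card
/-- corners of a Ferrers diagram -/
noncomputable def cornersT (F : Finset (ℕ × ℕ)) : Finset (ℕ × ℕ) :=
  F.filter (fun p => (p.1 + 1, p.2) ∉ F ∧ (p.1, p.2 + 1) ∉ F)
/-- non-occupied corners -/
noncomputable def nocT (F P : Finset (ℕ × ℕ)) : ℕ :=
  ((cornersT F).filter (fun p => p ∉ P)).card
/-- occupied corners -/
noncomputable def ocT (F P : Finset (ℕ × ℕ)) : ℕ :=
  ((cornersT F).filter (fun p => p ∈ P)).card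
/-- symmetric (invariant under reflection across the main diagonal) -/
def IsSymTLT (F P : Finset (ℕ × ℕ)) : Prop :=
  F.image Prod.swap = F ∧ P.image Prod.swap = P

/-! ### Alternative tableaux (border-label model)
A Ferrers diagram of size `n` (empty rows and columns allowed) is encoded by
the set `C ⊆ {1,…,n}` of its column labels (labels of the south-east border
steps, read from north-east to south-west); the remaining labels are row
labels.  Row `r` and column `c` intersect in a cell (written `(r, c)`)
exactly when `r < c`.  Inside a row, cells further to the left have *larger*
column labels; inside a column, cells further up have *smaller* row labels.
An alternative tableau is `(C, L, U)` where `L` (resp. `U`) is the set of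
cells containing a left (resp. up) arrow. -/

def IsAT (n : ℕ) (C : Finset ℕ) (L U : Finset (ℕ × ℕ)) : Prop :=
  C ⊆ Finset.Icc 1 n ∧ Disjoint L U ∧
  (∀ p ∈ L ∪ U, p.1 ∈ Finset.Icc 1 n ∧ p.1 ∉ C ∧ p.2 ∈ C ∧ p.1 < p.2) ∧
  (∀ p ∈ L, ∀ c' : ℕ, p.2 < c' → (p.1, c') ∉ L ∪ U) ∧
  (∀ p ∈ U, ∀ r' : ℕ, r' < p.1 → (r', p.2) ∉ L ∪ U)

/-- the finite set of alternative tableaux of size `n` -/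
noncomputable def ATset (n : ℕ) :
    Finset (Finset ℕ × Finset (ℕ × ℕ) × Finset (ℕ × ℕ)) :=
  ((Finset.Icc 1 n).powerset ×ˢ
    ((Finset.Icc 1 n ×ˢ Finset.Icc 1 n).powerset ×ˢ
      (Finset.Icc 1 n ×ˢ Finset.Icc 1 n).powerset)).filter
    (fun T => IsAT n T.1 T.2.1 T.2.2)

/-- alternative tableaux of size `n` in which every column contains an up arrow -/
noncomputable def ATstar (n : ℕ) :
    Finset (Finset ℕ × Finset (ℕ × ℕ) × Finset (ℕ × ℕ)) :=
  (ATset n).filter (fun T => ∀ c ∈ T.1, ∃ p ∈ T.2.2, p.2 = c)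

/-- label of the topmost row -/
noncomputable def topRowA (n : ℕ) (C : Finset ℕ) : ℕ :=
  WithTop.untopD 0 ((Finset.Icc 1 n \ C).min)
/-- number of arrows in the topmost row -/
noncomputable def topA (n : ℕ) (C : Finset ℕ) (L U : Finset (ℕ × ℕ)) : ℕ :=
  ((L ∪ U).filter (fun p => p.1 = topRowA n C)).card
/-- number of unrestricted rows (rows with no left arrow) -/
noncomputable def urrA (n : ℕ) (C : Finset ℕ) (L : Finset (ℕ × ℕ)) : ℕ :=
  ((Finset.Icc 1 n \ C).filter (fun r => ∀ p ∈ L, p.1 ≠ r)).card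
/-- number of non-occupied corners (the corners are exactly the cells `(c-1, c)`
with `c` a column label and `c-1` a row label) -/
noncomputable def nocA (n : ℕ) (C : Finset ℕ) (L U : Finset (ℕ × ℕ)) : ℕ :=
  (C.filter (fun c => c - 1 ∈ Finset.Icc 1 n \ C ∧ (c - 1, c) ∉ L ∪ U)).card
/-- symmetric alternative tableau of size `2n` (reflection across the main
diagonal exchanges border label `k` with `2n+1-k`, rows with columns and
left arrows with up arrows) -/
def IsSymAT (n : ℕ) (C : Finset ℕ) (L U : Finset (ℕ × ℕ)) : Prop :=
  (∀ k ∈ Finset.Icc 1 (2 * n), (k ∈ C ↔ (2 * n + 1 - k) ∉ C)) ∧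
  (∀ r c : ℕ, (r, c) ∈ L ↔ (2 * n + 1 - c, 2 * n + 1 - r) ∈ U)

/-! ### Linked partitions (linear representation / arc model)
A linked partition of `{1,…,n}` is identified with its set of arcs `(i, j)`,
`i < j`: each vertex is the right-hand endpoint of at most one arc. -/

def IsLP (n : ℕ) (A : Finset (ℕ × ℕ)) : Prop :=
  (∀ p ∈ A, 1 ≤ p.1 ∧ p.1 < p.2 ∧ p.2 ≤ n) ∧
  (∀ p ∈ A, ∀ q ∈ A, p.2 = q.2 → p.1 = q.1)

noncomputable def LP (n : ℕ) : Finset (Finset (ℕ × ℕ)) :=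
  ((Finset.Icc 1 n ×ˢ Finset.Icc 1 n).powerset).filter (IsLP n)

/-- number of origins plus singletons (= vertices with no incoming arc) -/
noncomputable def osL (n : ℕ) (A : Finset (ℕ × ℕ)) : ℕ :=
  ((Finset.Icc 1 n).filter (fun j => ∀ p ∈ A, p.2 ≠ j)).card
/-- number of arcs with left-hand endpoint `1` -/
noncomputable def oneL (A : Finset (ℕ × ℕ)) : ℕ :=
  (A.filter (fun p => p.1 = 1)).card
/-- a destination: only a right-hand endpoint -/
def IsDest (A : Finset (ℕ × ℕ)) (j : ℕ) : Prop :=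
  (∃ p ∈ A, p.2 = j) ∧ ∀ p ∈ A, p.1 ≠ j

/-- consecutive pairs of a finite set of naturals -/
noncomputable def consecPairs (S : Finset ℕ) : Finset (ℕ × ℕ) :=
  (S ×ˢ S).filter (fun p => p.1 < p.2 ∧ ∀ k ∈ S, ¬(p.1 < k ∧ k < p.2))

/-- the set of row labels of cells of column `c` containing an arrow -/
noncomputable def colRows (L U : Finset (ℕ × ℕ)) (c : ℕ) : Finset ℕ :=
  ((L ∪ U).filter (fun p => p.2 = c)).image Prod.fst

/-- the map `Φ`: for each column `j`, with the up arrow in row `i₁` and the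
left arrows in rows `i₂ < … < i_t`, draw the arcs `(i₁,i₂), …, (i_{t-1},i_t), (i_t, j)`,
i.e. the consecutive pairs of `{i₁,…,i_t, j}`. -/
noncomputable def Phi (T : Finset ℕ × Finset (ℕ × ℕ) × Finset (ℕ × ℕ)) :
    Finset (ℕ × ℕ) :=
  T.1.biUnion (fun c => consecPairs (insert c (colRows T.2.1 T.2.2 c)))

/-! ### Type B alternative tableaux
Encoded by `(C, L, U)` with `C ⊆ Icc 1 n` the set of column labels of the
subdiagram; rows of the shifted diagram are labelled by
`(Icc 1 n \ C) ∪ (-C)`, rows higher up having smaller labels.  Row `x` and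
column `c` intersect in a cell exactly when (`x > 0` and `x < c`) or
(`x < 0` and `-x ≤ c`); the cell `(-c, c)` is the diagonal cell of row `-c`. -/

def cellB (n : ℕ) (C : Finset ℤ) (x c : ℤ) : Prop :=
  c ∈ C ∧ ((1 ≤ x ∧ x ≤ (n : ℤ) ∧ x ∉ C ∧ x < c) ∨ (x < 0 ∧ -x ∈ C ∧ -x ≤ c))

def IsATB (n : ℕ) (C : Finset ℤ) (L U : Finset (ℤ × ℤ)) : Prop :=
  C ⊆ Finset.Icc 1 (n : ℤ) ∧ Disjoint L U ∧
  (∀ p ∈ L ∪ U, p.2 ∈ C ∧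
    ((1 ≤ p.1 ∧ p.1 ≤ (n : ℤ) ∧ p.1 ∉ C ∧ p.1 < p.2) ∨
      (p.1 < 0 ∧ -p.1 ∈ C ∧ -p.1 < p.2))) ∧
  (∀ p ∈ L, ∀ c' : ℤ, p.2 < c' → (p.1, c') ∉ L ∪ U) ∧
  (∀ p ∈ U, ∀ x' : ℤ, x' < p.1 → (x', p.2) ∉ L ∪ U) ∧
  (∀ i ∈ C, (∃ p ∈ U, p.2 = i) → ∀ c' : ℤ, (-i, c') ∉ L ∪ U)

noncomputable def ATB (n : ℕ) :
    Finset (Finset ℤ × Finset (ℤ × ℤ) × Finset (ℤ × ℤ)) :=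
  ((Finset.Icc (1 : ℤ) (n : ℤ)).powerset ×ˢ
    ((Finset.Icc (-(n : ℤ)) (n : ℤ) ×ˢ Finset.Icc (1 : ℤ) (n : ℤ)).powerset ×ˢ
      (Finset.Icc (-(n : ℤ)) (n : ℤ) ×ˢ Finset.Icc (1 : ℤ) (n : ℤ)).powerset)).filter
    (fun T => IsATB n T.1 T.2.1 T.2.2)

/-- the row labels of a type B alternative tableau -/
noncomputable def rowsB (n : ℕ) (C : Finset ℤ) : Finset ℤ :=
  (Finset.Icc (1 : ℤ) (n : ℤ) \ C) ∪ C.image (fun c => -c)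

/-- number of unrestricted rows: row `x` is unrestricted when it contains no
left arrow and column `|x|` (if it exists) contains no up arrow -/
noncomputable def urrB (n : ℕ) (C : Finset ℤ) (L U : Finset (ℤ × ℤ)) : ℕ :=
  ((rowsB n C).filter (fun x => (∀ p ∈ L, p.1 ≠ x) ∧ ∀ p ∈ U, p.2 ≠ |x|)).card

/-- the corners of the shifted Ferrers diagram -/
noncomputable def cornersB (n : ℕ) (C : Finset ℤ) : Finset (ℤ × ℤ) :=
  (Finset.Icc (-(n : ℤ)) (n : ℤ) ×ˢ Finset.Icc (1 : ℤ) (n : ℤ)).filter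
    (fun p => cellB n C p.1 p.2 ∧ (∀ x' : ℤ, p.1 < x' → ¬ cellB n C x' p.2) ∧
      (∀ c' : ℤ, c' < p.2 → ¬ cellB n C p.1 c'))

/-- number of non-occupied diagonal corners -/
noncomputable def nocDiagB (n : ℕ) (C : Finset ℤ) (L U : Finset (ℤ × ℤ)) : ℕ :=
  ((cornersB n C).filter (fun p => p.1 = -p.2 ∧ p ∉ L ∪ U)).card
/-- number of non-occupied non-diagonal corners -/
noncomputable def nocOffB (n : ℕ) (C : Finset ℤ) (L U : Finset (ℤ × ℤ)) : ℕ :=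
  ((cornersB n C).filter (fun p => p.1 ≠ -p.2 ∧ p ∉ L ∪ U)).card

/-! ### Type B linked partitions
A pair `(V, A)`: for each `i ∈ {1,…,n}` exactly one of `i, -i` belongs to
the vertex set `V`; `A` is the set of arcs `(x, y)`, `x < y`, with each
vertex the right-hand endpoint of at most one arc. -/

def IsLPB (n : ℕ) (V : Finset ℤ) (A : Finset (ℤ × ℤ)) : Prop :=
  (∀ v ∈ V, 1 ≤ |v| ∧ |v| ≤ (n : ℤ)) ∧
  (∀ i ∈ Finset.Icc (1 : ℤ) (n : ℤ), ((i ∈ V ∧ -i ∉ V) ∨ (-i ∈ V ∧ i ∉ V))) ∧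
  (∀ p ∈ A, p.1 ∈ V ∧ p.2 ∈ V ∧ p.1 < p.2) ∧
  (∀ p ∈ A, ∀ q ∈ A, p.2 = q.2 → p.1 = q.1)

noncomputable def LPB (n : ℕ) : Finset (Finset ℤ × Finset (ℤ × ℤ)) :=
  ((Finset.Icc (-(n : ℤ)) (n : ℤ)).powerset ×ˢ
    (Finset.Icc (-(n : ℤ)) (n : ℤ) ×ˢ Finset.Icc (-(n : ℤ)) (n : ℤ)).powerset).filter
    (fun T => IsLPB n T.1 T.2)

/-- number of origins plus singletons (= vertices with no incoming arc) -/
noncomputable def osB (V : Finset ℤ) (A : Finset (ℤ × ℤ)) : ℕ :=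
  (V.filter (fun v => ∀ p ∈ A, p.2 ≠ v)).card

/-- a legal destination: `j` is only a right-hand endpoint, and its incoming
arc `(a, j)` satisfies `|a| < |j|` -/
def IsLegalDestB (A : Finset (ℤ × ℤ)) (j : ℤ) : Prop :=
  (∃ p ∈ A, p.2 = j ∧ |p.1| < |j|) ∧ ∀ p ∈ A, p.1 ≠ j

/-- consecutive pairs of a finite set of integers -/
noncomputable def consecPairsZ (S : Finset ℤ) : Finset (ℤ × ℤ) :=
  (S ×ˢ S).filter (fun p => p.1 < p.2 ∧ ∀ k ∈ S, ¬(p.1 < k ∧ k < p.2))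

/-- row labels of cells of column `c` containing an arrow -/
noncomputable def colRowsB (L U : Finset (ℤ × ℤ)) (c : ℤ) : Finset ℤ :=
  ((L ∪ U).filter (fun p => p.2 = c)).image Prod.fst

/-- column `c` contains an up arrow -/
def HasUp (U : Finset (ℤ × ℤ)) (c : ℤ) : Prop := ∃ p ∈ U, p.2 = c

/-- the map `Φ_B`: columns with an up arrow give positive vertices and chains
of arcs through their arrows (consecutive pairs of the arrow rows together
with the column label); columns without an up arrow give negative vertices
`-j` and arcs from `-j` to each row containing a left arrow of that column;
rows give positive vertices. -/
noncomputable def PhiB (n : ℕ) (T : Finset ℤ × Finset (ℤ × ℤ) × Finset (ℤ × ℤ)) :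
    Finset ℤ × Finset (ℤ × ℤ) :=
  ((Finset.Icc (1 : ℤ) (n : ℤ) \ T.1) ∪ T.1.filter (fun c => HasUp T.2.2 c) ∪
      (T.1.filter (fun c => ¬ HasUp T.2.2 c)).image (fun c => -c),
    (T.1.filter (fun c => HasUp T.2.2 c)).biUnion
        (fun c => consecPairsZ (insert c (colRowsB T.2.1 T.2.2 c))) ∪
      (T.1.filter (fun c => ¬ HasUp T.2.2 c)).biUnion
        (fun c => (colRowsB T.2.1 T.2.2 c).image (fun r => (-c, r))))

set_option linter.unusedSectionVars false

namespace SymATB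

def phi (n : ℕ) (p : ℕ × ℕ) : ℤ × ℤ :=
  (if p.1 ≤ n then (p.1 : ℤ) - (n+1) else (p.1 : ℤ) - n, (p.2 : ℤ) - n)

noncomputable def psi (n : ℕ) (q : ℤ × ℤ) : ℕ × ℕ :=
  ((if q.1 < 0 then q.1 + (n+1) else q.1 + n).toNat, (q.2 + n).toNat)

def rfl2 (n : ℕ) (p : ℕ × ℕ) : ℕ × ℕ := (2*n+1-p.2, 2*n+1-p.1)

lemma psi_phi (n : ℕ) (p : ℕ × ℕ) : psi n (phi n p) = p := by
  obtain ⟨a, b⟩ := p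
  simp only [phi, psi, Prod.mk.injEq]
  constructor <;> · (try split_ifs) <;> omega

lemma phi_psi (n : ℕ) (q : ℤ × ℤ) (h1 : q.1 ≠ 0) (h2 : -(n+1 : ℤ) ≤ q.1)
    (h3 : -(n:ℤ) ≤ q.2) : phi n (psi n q) = q := by
  obtain ⟨a, b⟩ := q
  simp only [phi, psi, Prod.mk.injEq] at *
  constructor <;> · (try split_ifs) <;> omega

lemma mem_image_phi (n : ℕ) (S : Finset (ℕ × ℕ)) (q : ℤ × ℤ) :
    q ∈ S.image (phi n) ↔ psi n q ∈ S ∧ phi n (psi n q) = q := by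
  constructor
  · rintro hq
    rw [Finset.mem_image] at hq
    obtain ⟨p, hp, rfl⟩ := hq
    rw [psi_phi]; exact ⟨hp, rfl⟩
  · rintro ⟨h1, h2⟩
    rw [Finset.mem_image]; exact ⟨psi n q, h1, h2⟩

lemma phi_fst (n : ℕ) (p : ℕ × ℕ) :
    (phi n p).1 = if p.1 ≤ n then (p.1 : ℤ) - (n+1) else (p.1 : ℤ) - n := rfl

lemma phi_snd (n : ℕ) (p : ℕ × ℕ) : (phi n p).2 = (p.2 : ℤ) - n := rfl

lemma phi_fst_inj {n : ℕ} {p q : ℕ × ℕ} (h : (phi n p).1 = (phi n q).1) :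
    p.1 = q.1 := by
  simp only [phi_fst] at h; split_ifs at h <;> omega

lemma phi_fst_lt {n : ℕ} {p q : ℕ × ℕ} (h : (phi n p).1 < (phi n q).1) :
    p.1 < q.1 := by
  simp only [phi_fst] at h; split_ifs at h <;> omega

lemma phi_fst_lt' {n : ℕ} {p q : ℕ × ℕ} (h : p.1 < q.1) :
    (phi n p).1 < (phi n q).1 := by
  simp only [phi_fst]; split_ifs <;> omega

section Facts
variable {n : ℕ} {C : Finset ℕ} {L U : Finset (ℕ × ℕ)}
  (hA : IsAT (2*n) C L U) (hS : IsSymAT n C L U)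

include hA in
lemma cellFacts {p : ℕ × ℕ} (hp : p ∈ L ∪ U) :
    1 ≤ p.1 ∧ p.1 ≤ 2*n ∧ p.1 ∉ C ∧ p.2 ∈ C ∧ p.1 < p.2 ∧ 1 ≤ p.2 ∧ p.2 ≤ 2*n := by
  obtain ⟨h1, h2, h3, h4⟩ := hA.2.2.1 p hp
  have h5 := hA.1 h3
  simp only [Finset.mem_Icc] at h1 h5
  exact ⟨h1.1, h1.2, h2, h3, h4, h5.1, h5.2⟩

include hA hS in
lemma symUL {r c : ℕ} (h : (r, c) ∈ U) : (2*n+1-c, 2*n+1-r) ∈ L := by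
  have hf := cellFacts hA (Finset.mem_union_right L h)
  simp only at hf
  rw [hS.2]
  have e1 : 2*n+1 - (2*n+1-r) = r := by omega
  have e2 : 2*n+1 - (2*n+1-c) = c := by omega
  rw [e1, e2]; exact h

include hA hS in
lemma symLU {r c : ℕ} (h : (r, c) ∈ L) : (2*n+1-c, 2*n+1-r) ∈ U :=
  (hS.2 r c).1 h

include hA hS in
lemma diag_empty {p : ℕ × ℕ} (hp : p ∈ L ∪ U) : p.1 + p.2 ≠ 2*n+1 := by
  intro heq
  obtain ⟨h1, h2, h3, h4, h5, h6, h7⟩ := cellFacts hA hp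
  obtain ⟨r, c⟩ := p
  simp only at h1 h2 h5 h6 h7 heq
  have e1 : 2*n+1-c = r := by omega
  have e2 : 2*n+1-r = c := by omega
  rcases Finset.mem_union.1 hp with h | h
  · have := symLU hA hS h
    rw [e1, e2] at this
    exact (Finset.disjoint_left.1 hA.2.1) h this
  · have := symUL hA hS h
    rw [e1, e2] at this
    exact (Finset.disjoint_left.1 hA.2.1) this h

include hA hS in
lemma kept_or_deleted {p : ℕ × ℕ} (hp : p ∈ L ∪ U) :
    2*n+2 ≤ p.1 + p.2 ∨ p.1 + p.2 ≤ 2*n := by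
  have := diag_empty hA hS hp
  omega

end Facts

end SymATB

noncomputable section
namespace SymATB

noncomputable def gmap (n : ℕ) (T : Finset ℕ × Finset (ℕ × ℕ) × Finset (ℕ × ℕ)) :
    Finset ℤ × Finset (ℤ × ℤ) × Finset (ℤ × ℤ) :=
  ((T.1.filter (fun c => n+1 ≤ c)).image (fun c => (c : ℤ) - n),
   (T.2.1.filter (fun p => 2*n+2 ≤ p.1 + p.2)).image (phi n),
   (T.2.2.filter (fun p => 2*n+2 ≤ p.1 + p.2)).image (phi n))

noncomputable def hmap (n : ℕ) (T : Finset ℤ × Finset (ℤ × ℤ) × Finset (ℤ × ℤ)) :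
    Finset ℕ × Finset (ℕ × ℕ) × Finset (ℕ × ℕ) :=
  ((Finset.Icc 1 (2*n)).filter
      (fun c => if n+1 ≤ c then ((c : ℤ) - n ∈ T.1) else ¬((n : ℤ) + 1 - c ∈ T.1)),
   T.2.1.image (psi n) ∪ T.2.2.image (fun q => rfl2 n (psi n q)),
   T.2.2.image (psi n) ∪ T.2.1.image (fun q => rfl2 n (psi n q)))

section Fwd
variable {n : ℕ} {C : Finset ℕ} {L U : Finset (ℕ × ℕ)}
  (hA : IsAT (2*n) C L U) (hS : IsSymAT n C L U)

lemma mem_gC {c' : ℤ} :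
    c' ∈ (gmap n (C, L, U)).1 ↔ ∃ c ∈ C, n+1 ≤ c ∧ (c : ℤ) - n = c' := by
  simp [gmap, Finset.mem_image, Finset.mem_filter]
  tauto

lemma mem_gL {q : ℤ × ℤ} :
    q ∈ (gmap n (C, L, U)).2.1 ↔ ∃ p ∈ L, 2*n+2 ≤ p.1 + p.2 ∧ phi n p = q := by
  simp [gmap, Finset.mem_image, Finset.mem_filter]
  tauto

lemma mem_gU {q : ℤ × ℤ} :
    q ∈ (gmap n (C, L, U)).2.2 ↔ ∃ p ∈ U, 2*n+2 ≤ p.1 + p.2 ∧ phi n p = q := by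
  simp [gmap, Finset.mem_image, Finset.mem_filter]
  tauto

include hA in
lemma mem_gLU {q : ℤ × ℤ}
    (hq : q ∈ (gmap n (C, L, U)).2.1 ∪ (gmap n (C, L, U)).2.2) :
    ∃ p ∈ L ∪ U, 2*n+2 ≤ p.1 + p.2 ∧ phi n p = q := by
  rcases Finset.mem_union.1 hq with h | h
  · obtain ⟨p, hp, h2, h3⟩ := mem_gL.1 h
    exact ⟨p, Finset.mem_union_left _ hp, h2, h3⟩
  · obtain ⟨p, hp, h2, h3⟩ := mem_gU.1 h
    exact ⟨p, Finset.mem_union_right _ hp, h2, h3⟩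

include hA hS in
theorem gmap_isATB : IsATB n (gmap n (C, L, U)).1 (gmap n (C, L, U)).2.1
    (gmap n (C, L, U)).2.2 := by
  have hCsub : ∀ c ∈ C, 1 ≤ c ∧ c ≤ 2*n := by
    intro c hc; have := hA.1 hc; simp only [Finset.mem_Icc] at this; exact this
  refine ⟨?_, ?_, ?_, ?_, ?_, ?_⟩
  · -- C' ⊆ Icc 1 n
    intro c' hc'
    obtain ⟨c, hc, hle, rfl⟩ := mem_gC.1 hc'
    have := hCsub c hc
    simp only [Finset.mem_Icc]; omega
  · -- disjoint
    rw [Finset.disjoint_left]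
    intro q hqL hqU
    obtain ⟨p, hp, _, hphi⟩ := mem_gL.1 hqL
    obtain ⟨p', hp', _, hphi'⟩ := mem_gU.1 hqU
    have : p = p' := by
      have := hphi.trans hphi'.symm
      have := psi_phi n p ▸ psi_phi n p' ▸ congrArg (psi n) this
      exact this
    exact (Finset.disjoint_left.1 hA.2.1) hp (this ▸ hp')
  · -- cell condition
    intro q hq
    obtain ⟨p, hp, hk, rfl⟩ := mem_gLU hA hq
    obtain ⟨h1, h2, h3, h4, h5, h6, h7⟩ := cellFacts hA hp
    have hp2 : n + 2 ≤ p.2 := by omega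
    constructor
    · exact mem_gC.2 ⟨p.2, h4, by omega, by rw [phi_snd]⟩
    · by_cases hle : p.1 ≤ n
      · right
        rw [phi_fst, if_pos hle, phi_snd]
        refine ⟨by omega, ?_, by omega⟩
        have hrowC : 2*n+1-p.1 ∈ C := by
          have := hS.1 p.1 (Finset.mem_Icc.2 ⟨h1, by omega⟩)
          by_contra hcon
          exact h3 (this.2 hcon)
        refine mem_gC.2 ⟨2*n+1-p.1, hrowC, by omega, ?_⟩
        push_cast; omega
      · left
        rw [phi_fst, if_neg hle, phi_snd]
        refine ⟨by omega, by omega, ?_, by omega⟩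
        intro hcon
        obtain ⟨c, hc, _, hceq⟩ := mem_gC.1 hcon
        have : c = p.1 := by omega
        exact h3 (this ▸ hc)
  · -- left arrow condition
    intro q hq c' hlt hmem
    obtain ⟨a, haL, hak, haq⟩ := mem_gL.1 hq
    obtain ⟨b, hbLU, hbk, hbq⟩ := mem_gLU hA hmem
    have hb1 : b.1 = a.1 := by
      apply phi_fst_inj (n := n)
      rw [haq, hbq]
    have hb2 : a.2 < b.2 := by
      have e1 : (a.2 : ℤ) - n = q.2 := by rw [← phi_snd, haq]
      have e2 : (b.2 : ℤ) - n = c' := by rw [← phi_snd, hbq]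
      omega
    have := hA.2.2.2.1 a haL b.2 hb2
    apply this
    have : (a.1, b.2) = b := by rw [← hb1]
    rw [this]; exact hbLU
  · -- up arrow condition
    intro q hq x' hlt hmem
    obtain ⟨a, haU, hak, haq⟩ := mem_gU.1 hq
    obtain ⟨b, hbLU, hbk, hbq⟩ := mem_gLU hA hmem
    have hb2 : b.2 = a.2 := by
      have e1 : (a.2 : ℤ) - n = q.2 := by rw [← phi_snd, haq]
      have e2 : (b.2 : ℤ) - n = q.2 := by rw [← phi_snd, hbq]
      omega
    have hb1 : b.1 < a.1 := by
      apply phi_fst_lt (n := n)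
      rw [haq, hbq]; exact hlt
    have := hA.2.2.2.2 a haU b.1 hb1
    apply this
    have : (b.1, a.2) = b := by rw [← hb2]
    rw [this]; exact hbLU
  · -- type B condition
    intro i hi hex c' hmem
    obtain ⟨q, hq, hq2⟩ := hex
    obtain ⟨a, haU, hak, haq⟩ := mem_gU.1 hq
    obtain ⟨b, hbLU, hbk, hbq⟩ := mem_gLU hA hmem
    obtain ⟨ha1, ha2, ha3, ha4, ha5, ha6, ha7⟩ := cellFacts hA (Finset.mem_union_right L haU)
    obtain ⟨hb1, hb2, hb3, hb4, hb5, hb6, hb7⟩ := cellFacts hA hbLU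
    have hi' : (a.2 : ℤ) - n = i := by rw [← phi_snd, haq, hq2]
    have ha2n : n + 2 ≤ a.2 := by omega
    -- b.1 = 2*n+1-a.2
    have hbval : (phi n b).1 = -i := by rw [hbq]
    have hble : b.1 ≤ n := by
      by_contra hcon
      rw [phi_fst, if_neg hcon] at hbval
      omega
    have hb1v : b.1 = 2*n+1-a.2 := by
      rw [phi_fst, if_pos hble] at hbval
      omega
    -- reflection of a is a left arrow in row 2*n+1-a.2
    have hra : (2*n+1-a.2, 2*n+1-a.1) ∈ L := by
      have := symUL hA hS (r := a.1) (c := a.2) (by rwa [Prod.mk.eta])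
      exact this
    have hlt : 2*n+1-a.1 < b.2 := by omega
    have := hA.2.2.2.1 _ hra b.2 hlt
    apply this
    simp only
    have : (2*n+1-a.2, b.2) = b := by rw [← hb1v]
    rw [this]; exact hbLU

include hA hS in
theorem gmap_mem_ranges :
    (gmap n (C, L, U)).1 ⊆ Finset.Icc (1:ℤ) n ∧
    (gmap n (C, L, U)).2.1 ⊆ Finset.Icc (-(n:ℤ)) n ×ˢ Finset.Icc (1:ℤ) n ∧
    (gmap n (C, L, U)).2.2 ⊆ Finset.Icc (-(n:ℤ)) n ×ˢ Finset.Icc (1:ℤ) n := by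
  have key : ∀ q ∈ (gmap n (C, L, U)).2.1 ∪ (gmap n (C, L, U)).2.2,
      q ∈ Finset.Icc (-(n:ℤ)) n ×ˢ Finset.Icc (1:ℤ) n := by
    intro q hq
    obtain ⟨p, hp, hk, rfl⟩ := mem_gLU hA hq
    obtain ⟨h1, h2, h3, h4, h5, h6, h7⟩ := cellFacts hA hp
    simp only [Finset.mem_product, Finset.mem_Icc, phi_snd]
    constructor
    · rw [phi_fst]; split_ifs <;> constructor <;> omega
    · omega
  refine ⟨(gmap_isATB hA hS).1, ?_, ?_⟩
  · intro q hq; exact key q (Finset.mem_union_left _ hq)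
  · intro q hq; exact key q (Finset.mem_union_right _ hq)

end Fwd
end SymATB

namespace SymATB
section Bwd
variable {n : ℕ} {C' : Finset ℤ} {L' U' : Finset (ℤ × ℤ)}
  (hB : IsATB n C' L' U')

include hB in
lemma Bfacts {q : ℤ × ℤ} (hq : q ∈ L' ∪ U') :
    q.2 ∈ C' ∧ 1 ≤ q.2 ∧ q.2 ≤ n ∧
    ((1 ≤ q.1 ∧ q.1 ≤ n ∧ q.1 ∉ C' ∧ q.1 < q.2) ∨
     (-(n:ℤ) ≤ q.1 ∧ q.1 ≤ -1 ∧ -q.1 ∈ C' ∧ -q.1 < q.2)) := by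
  obtain ⟨h1, h2⟩ := hB.2.2.1 q hq
  have hq2 := hB.1 h1
  simp only [Finset.mem_Icc] at hq2
  refine ⟨h1, hq2.1, hq2.2, ?_⟩
  rcases h2 with h | h
  · left; exact h
  · right
    have := hB.1 h.2.1
    simp only [Finset.mem_Icc] at this
    exact ⟨by omega, by omega, h.2.1, h.2.2⟩

lemma psi_spec (n : ℕ) (q : ℤ × ℤ) :
    ((q.2 ≥ -(n:ℤ)) → ((psi n q).2 : ℤ) = q.2 + n) ∧
    (q.1 < 0 → -(n:ℤ) - 1 ≤ q.1 → ((psi n q).1 : ℤ) = q.1 + n + 1) ∧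
    (0 ≤ q.1 → ((psi n q).1 : ℤ) = q.1 + n) := by
  simp only [psi]
  refine ⟨fun h => by omega, fun h h' => ?_, fun h => ?_⟩
  · rw [if_pos h]; omega
  · rw [if_neg (by omega)]; omega

lemma rfl2_def (n : ℕ) (p : ℕ × ℕ) : rfl2 n p = (2*n+1-p.2, 2*n+1-p.1) := rfl

include hB in
lemma psi_mem_facts {q : ℤ × ℤ} (hq : q ∈ L' ∪ U') :
    (((psi n q).2 : ℤ) = q.2 + n) ∧
    (q.1 < 0 → ((psi n q).1 : ℤ) = q.1 + n + 1) ∧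
    (0 < q.1 → ((psi n q).1 : ℤ) = q.1 + n) ∧
    1 ≤ (psi n q).1 ∧ (psi n q).1 ≤ 2*n ∧ n+1 ≤ (psi n q).2 ∧ (psi n q).2 ≤ 2*n ∧
    2*n+2 ≤ (psi n q).1 + (psi n q).2 ∧
    phi n (psi n q) = q := by
  obtain ⟨hc, h1, h2, hcase⟩ := Bfacts hB hq
  obtain ⟨s1, s2, s3⟩ := psi_spec n q
  have e2 : ((psi n q).2 : ℤ) = q.2 + n := s1 (by omega)
  have key : (q.1 < 0 → ((psi n q).1 : ℤ) = q.1 + n + 1) ∧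
      (0 < q.1 → ((psi n q).1 : ℤ) = q.1 + n) :=
    ⟨fun h => s2 h (by omega), fun h => s3 (by omega)⟩
  have hphi : phi n (psi n q) = q := phi_psi n q (by omega) (by omega) (by omega)
  rcases hcase with h | h
  · have := key.2 (by omega)
    exact ⟨e2, key.1, key.2, by omega, by omega, by omega, by omega, by omega, hphi⟩
  · have := key.1 (by omega)
    exact ⟨e2, key.1, key.2, by omega, by omega, by omega, by omega, by omega, hphi⟩

include hB in
lemma rfl2_psi_facts {q : ℤ × ℤ} (hq : q ∈ L' ∪ U') :
    ((rfl2 n (psi n q)).1 : ℤ) = n + 1 - q.2 ∧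
    ((rfl2 n (psi n q)).2 : ℤ) = 2*n + 1 - ((psi n q).1 : ℤ) ∧
    1 ≤ (rfl2 n (psi n q)).1 ∧ (rfl2 n (psi n q)).1 ≤ n ∧
    1 ≤ (rfl2 n (psi n q)).2 ∧ (rfl2 n (psi n q)).2 ≤ 2*n ∧
    (rfl2 n (psi n q)).1 + (rfl2 n (psi n q)).2 ≤ 2*n := by
  obtain ⟨hc, h1, h2, hcase⟩ := Bfacts hB hq
  obtain ⟨e2, k1, k2, b1, b2, b3, b4, b5, _⟩ := psi_mem_facts hB hq
  simp only [rfl2_def]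
  refine ⟨by push_cast; omega, by push_cast; omega, by omega, by omega, by omega,
    by omega, by omega⟩

lemma mem_hL {p : ℕ × ℕ} :
    p ∈ (hmap n (C', L', U')).2.1 ↔
      (∃ q ∈ L', psi n q = p) ∨ (∃ q ∈ U', rfl2 n (psi n q) = p) := by
  simp [hmap, Finset.mem_union, Finset.mem_image]

lemma mem_hU {p : ℕ × ℕ} :
    p ∈ (hmap n (C', L', U')).2.2 ↔
      (∃ q ∈ U', psi n q = p) ∨ (∃ q ∈ L', rfl2 n (psi n q) = p) := by
  simp [hmap, Finset.mem_union, Finset.mem_image]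

lemma mem_hC {c : ℕ} :
    c ∈ (hmap n (C', L', U')).1 ↔
      (1 ≤ c ∧ c ≤ 2*n ∧ if n+1 ≤ c then ((c : ℤ) - n ∈ C') else ¬((n : ℤ) + 1 - c ∈ C')) := by
  simp [hmap, Finset.mem_filter, Finset.mem_Icc]
  tauto

end Bwd
end SymATB

namespace SymATB
section Bwd2
variable {n : ℕ} {C' : Finset ℤ} {L' U' : Finset (ℤ × ℤ)}
  (hB : IsATB n C' L' U')

include hB in
lemma psiF {q : ℤ × ℤ} (hq : q ∈ L' ∪ U') :
    q.2 ∈ C' ∧ 1 ≤ q.2 ∧ q.2 ≤ (n:ℤ) ∧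
    ((psi n q).2 : ℤ) = q.2 + n ∧
    ((rfl2 n (psi n q)).1 : ℤ) = n + 1 - q.2 ∧
    ((rfl2 n (psi n q)).2 : ℤ) = 2*n + 1 - ((psi n q).1 : ℤ) ∧
    ((1 ≤ q.1 ∧ q.1 ∉ C' ∧ q.1 < q.2 ∧ ((psi n q).1 : ℤ) = q.1 + n) ∨
     (q.1 ≤ -1 ∧ -q.1 ∈ C' ∧ -q.1 < q.2 ∧ ((psi n q).1 : ℤ) = q.1 + n + 1)) := by
  obtain ⟨hc, h1, h2, hcase⟩ := Bfacts hB hq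
  have e2 : ((psi n q).2 : ℤ) = q.2 + n := by simp only [psi]; omega
  have ecase : ((1 ≤ q.1 ∧ q.1 ∉ C' ∧ q.1 < q.2 ∧ ((psi n q).1 : ℤ) = q.1 + n) ∨
      (q.1 ≤ -1 ∧ -q.1 ∈ C' ∧ -q.1 < q.2 ∧ ((psi n q).1 : ℤ) = q.1 + n + 1)) := by
    rcases hcase with h | h
    · exact Or.inl ⟨h.1, h.2.2.1, h.2.2.2, by simp only [psi]; split_ifs <;> omega⟩
    · exact Or.inr ⟨by omega, h.2.2.1, h.2.2.2, by simp only [psi]; split_ifs <;> omega⟩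
  refine ⟨hc, h1, h2, e2, ?_, ?_, ecase⟩
  · simp only [rfl2]; omega
  · simp only [rfl2]
    have : 1 ≤ ((psi n q).1 : ℤ) ∧ ((psi n q).1 : ℤ) ≤ 2*n := by
      rcases ecase with h | h <;> omega
    omega

include hB in
lemma mem_hLU' {p : ℕ × ℕ}
    (hp : p ∈ (hmap n (C', L', U')).2.1 ∪ (hmap n (C', L', U')).2.2) :
    (∃ b ∈ L' ∪ U', psi n b = p) ∨ (∃ b ∈ L' ∪ U', rfl2 n (psi n b) = p) := by
  rcases Finset.mem_union.1 hp with h | h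
  · rcases mem_hL.1 h with ⟨q, hq, e⟩ | ⟨q, hq, e⟩
    · exact Or.inl ⟨q, Finset.mem_union_left _ hq, e⟩
    · exact Or.inr ⟨q, Finset.mem_union_right _ hq, e⟩
  · rcases mem_hU.1 h with ⟨q, hq, e⟩ | ⟨q, hq, e⟩
    · exact Or.inl ⟨q, Finset.mem_union_right _ hq, e⟩
    · exact Or.inr ⟨q, Finset.mem_union_left _ hq, e⟩

include hB in
theorem hmap_isAT :
    IsAT (2*n) (hmap n (C', L', U')).1 (hmap n (C', L', U')).2.1
      (hmap n (C', L', U')).2.2 := by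
  refine ⟨?_, ?_, ?_, ?_, ?_⟩
  · -- C ⊆ Icc
    intro c hc
    have := mem_hC.1 hc
    simp only [Finset.mem_Icc]; omega
  · -- disjoint
    rw [Finset.disjoint_left]
    intro p hpL hpU
    rcases mem_hL.1 hpL with ⟨a, haL, ea⟩ | ⟨a, haU, ea⟩ <;>
      rcases mem_hU.1 hpU with ⟨b, hbU, eb⟩ | ⟨b, hbL, eb⟩
    · -- psi a = p = psi b, a ∈ L', b ∈ U'
      obtain ⟨_, ha1, ha2, _, _, _, hacase⟩ := psiF hB (Finset.mem_union_left _ haL)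
      obtain ⟨_, hb1, hb2, _, _, _, hbcase⟩ := psiF hB (Finset.mem_union_right _ hbU)
      have pa : phi n (psi n a) = a := phi_psi n a (by rcases hacase with h|h <;> omega) (by rcases hacase with h|h <;> omega) (by omega)
      have pb : phi n (psi n b) = b := phi_psi n b (by rcases hbcase with h|h <;> omega) (by rcases hbcase with h|h <;> omega) (by omega)
      have : a = b := by rw [← pa, ← pb, ea, eb]
      exact (Finset.disjoint_left.1 hB.2.1) haL (this ▸ hbU)
    · -- psi a = p = rfl2 psi b : kept vs deleted
      obtain ⟨_, _, _, ea2, _, _, ha⟩ := psiF hB (Finset.mem_union_left _ haL)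
      obtain ⟨_, _, _, _, eb1, eb2, hb⟩ := psiF hB (Finset.mem_union_left _ hbL)
      have e1 := congrArg Prod.fst (ea.trans eb.symm)
      have e2 := congrArg Prod.snd (ea.trans eb.symm)
      rcases ha with h|h <;> rcases hb with h'|h' <;> omega
    · obtain ⟨_, _, _, ea2, _, _, ha⟩ := psiF hB (Finset.mem_union_right _ haU)
      obtain ⟨_, _, _, _, eb1, eb2, hb⟩ := psiF hB (Finset.mem_union_right _ hbU)
      have e1 := congrArg Prod.fst (ea.trans eb.symm)
      have e2 := congrArg Prod.snd (ea.trans eb.symm)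
      rcases ha with h|h <;> rcases hb with h'|h' <;> omega
    · -- rfl2 psi a = p = rfl2 psi b, a ∈ U', b ∈ L'
      obtain ⟨_, ha1, ha2, ea2, ea3, ea4, ha⟩ := psiF hB (Finset.mem_union_right _ haU)
      obtain ⟨_, hb1, hb2, eb2, eb3, eb4, hb⟩ := psiF hB (Finset.mem_union_left _ hbL)
      have e1 := congrArg Prod.fst (ea.trans eb.symm)
      have e2 := congrArg Prod.snd (ea.trans eb.symm)
      have hab : a = b := by
        have : a.1 = b.1 ∧ a.2 = b.2 := by
          rcases ha with h|h <;> rcases hb with h'|h' <;> constructor <;> omega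
        exact Prod.ext this.1 this.2
      exact (Finset.disjoint_left.1 hB.2.1) hbL (hab ▸ haU)
  · -- cell condition
    intro p hp
    rcases mem_hLU' hB hp with ⟨b, hbLU, eb⟩ | ⟨b, hbLU, eb⟩
    · obtain ⟨hc2, h1, h2, e2, r1, r2, hcase⟩ := psiF hB hbLU
      have e1f := congrArg Prod.fst eb
      have e1s := congrArg Prod.snd eb
      refine ⟨?_, ?_, ?_, ?_⟩
      · simp only [Finset.mem_Icc]
        rcases hcase with h|h <;> omega
      · intro hmem
        obtain ⟨_, _, hcond⟩ := mem_hC.1 hmem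
        rcases hcase with h|h
        · rw [if_pos (by omega)] at hcond
          have : (p.1 : ℤ) - n = b.1 := by omega
          rw [this] at hcond
          exact h.2.1 hcond
        · rw [if_neg (by omega)] at hcond
          apply hcond
          have : (n:ℤ) + 1 - p.1 = -b.1 := by omega
          rw [this]
          exact h.2.1
      · rw [mem_hC]
        refine ⟨by omega, by rcases hcase with h|h <;> omega, ?_⟩
        rw [if_pos (by omega)]
        have : (p.2 : ℤ) - n = b.2 := by omega
        rw [this]; exact hc2
      · rcases hcase with h|h <;> omega
    · obtain ⟨hc2, h1, h2, e2, r1, r2, hcase⟩ := psiF hB hbLU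
      have e1f := congrArg Prod.fst eb
      have e1s := congrArg Prod.snd eb
      refine ⟨?_, ?_, ?_, ?_⟩
      · simp only [Finset.mem_Icc]
        rcases hcase with h|h <;> omega
      · intro hmem
        obtain ⟨_, _, hcond⟩ := mem_hC.1 hmem
        rw [if_neg (by omega)] at hcond
        apply hcond
        have : (n:ℤ) + 1 - p.1 = b.2 := by omega
        rw [this]; exact hc2
      · rw [mem_hC]
        rcases hcase with h|h
        · refine ⟨by omega, by omega, ?_⟩
          rw [if_neg (by omega)]
          intro hmem
          have : (n:ℤ) + 1 - p.2 = b.1 := by omega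
          rw [this] at hmem
          exact h.2.1 hmem
        · refine ⟨by omega, by omega, ?_⟩
          rw [if_pos (by omega)]
          have : (p.2 : ℤ) - n = -b.1 := by omega
          rw [this]; exact h.2.1
      · rcases hcase with h|h <;> omega
  · -- left arrow (row) condition
    intro p hpL c'' hc'' hmem
    rcases mem_hL.1 hpL with ⟨a, haLmem, ea⟩ | ⟨a, haUmem, ea⟩
    · -- kept left arrow, a ∈ L'
      obtain ⟨hac, ha1, ha2, ea2, ra1, ra2, hacase⟩ :=
        psiF hB (Finset.mem_union_left _ haLmem)
      have eaf := congrArg Prod.fst ea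
      have eas := congrArg Prod.snd ea
      rcases mem_hLU' hB hmem with ⟨b, hbLU, eb⟩ | ⟨b, hbLU, eb⟩
      · obtain ⟨hbc, hb1, hb2, eb2, rb1, rb2, hbcase⟩ := psiF hB hbLU
        have ebf := congrArg Prod.fst eb
        have ebs := congrArg Prod.snd eb
        simp only at ebf ebs
        have hb1a : b.1 = a.1 := by rcases hacase with h|h <;> rcases hbcase with h'|h' <;> omega
        have hlt : a.2 < b.2 := by omega
        apply hB.2.2.2.1 a haLmem b.2 hlt
        have : (a.1, b.2) = b := by rw [← hb1a]
        rw [this]; exact hbLU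
      · obtain ⟨hbc, hb1, hb2, eb2, rb1, rb2, hbcase⟩ := psiF hB hbLU
        have ebf := congrArg Prod.fst eb
        have ebs := congrArg Prod.snd eb
        simp only at ebf ebs
        rcases hacase with h|h <;> rcases hbcase with h'|h' <;> omega
    · -- deleted left arrow: reflection of up arrow a ∈ U'
      obtain ⟨hac, ha1, ha2, ea2, ra1, ra2, hacase⟩ :=
        psiF hB (Finset.mem_union_right _ haUmem)
      have eaf := congrArg Prod.fst ea
      have eas := congrArg Prod.snd ea
      rcases mem_hLU' hB hmem with ⟨b, hbLU, eb⟩ | ⟨b, hbLU, eb⟩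
      · obtain ⟨hbc, hb1, hb2, eb2, rb1, rb2, hbcase⟩ := psiF hB hbLU
        have ebf := congrArg Prod.fst eb
        have ebs := congrArg Prod.snd eb
        simp only at ebf ebs
        -- b.1 = -a.2 ; use clause 6 with i = a.2
        have hb1v : b.1 = -a.2 := by
          rcases hacase with h|h <;> rcases hbcase with h'|h' <;> omega
        apply hB.2.2.2.2.2 a.2 hac ⟨a, haUmem, rfl⟩ b.2
        have : (-a.2, b.2) = b := by rw [← hb1v]
        rw [this]; exact hbLU
      · obtain ⟨hbc, hb1, hb2, eb2, rb1, rb2, hbcase⟩ := psiF hB hbLU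
        have ebf := congrArg Prod.fst eb
        have ebs := congrArg Prod.snd eb
        simp only at ebf ebs
        have hb2v : b.2 = a.2 := by omega
        have hblt : b.1 < a.1 := by
          rcases hacase with h|h <;> rcases hbcase with h'|h' <;> omega
        apply hB.2.2.2.2.1 a haUmem b.1 hblt
        have : (b.1, a.2) = b := by rw [← hb2v, ← Prod.mk.eta (p := b)]
        rw [this]; exact hbLU
  · -- up arrow (column) condition
    intro p hpU r' hr' hmem
    rcases mem_hU.1 hpU with ⟨a, haUmem, ea⟩ | ⟨a, haLmem, ea⟩
    · obtain ⟨hac, ha1, ha2, ea2, ra1, ra2, hacase⟩ :=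
        psiF hB (Finset.mem_union_right _ haUmem)
      have eaf := congrArg Prod.fst ea
      have eas := congrArg Prod.snd ea
      rcases mem_hLU' hB hmem with ⟨b, hbLU, eb⟩ | ⟨b, hbLU, eb⟩
      · obtain ⟨hbc, hb1, hb2, eb2, rb1, rb2, hbcase⟩ := psiF hB hbLU
        have ebf := congrArg Prod.fst eb
        have ebs := congrArg Prod.snd eb
        simp only at ebf ebs
        have hb2v : b.2 = a.2 := by omega
        have hblt : b.1 < a.1 := by
          rcases hacase with h|h <;> rcases hbcase with h'|h' <;> omega
        apply hB.2.2.2.2.1 a haUmem b.1 hblt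
        have : (b.1, a.2) = b := by rw [← hb2v, ← Prod.mk.eta (p := b)]
        rw [this]; exact hbLU
      · obtain ⟨hbc, hb1, hb2, eb2, rb1, rb2, hbcase⟩ := psiF hB hbLU
        have ebf := congrArg Prod.fst eb
        have ebs := congrArg Prod.snd eb
        simp only at ebf ebs
        have hb1v : b.1 = -a.2 := by
          rcases hacase with h|h <;> rcases hbcase with h'|h' <;> omega
        apply hB.2.2.2.2.2 a.2 hac ⟨a, haUmem, rfl⟩ b.2
        have : (-a.2, b.2) = b := by rw [← hb1v]
        rw [this]; exact hbLU
    · -- deleted up arrow: reflection of left arrow a ∈ L'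
      obtain ⟨hac, ha1, ha2, ea2, ra1, ra2, hacase⟩ :=
        psiF hB (Finset.mem_union_left _ haLmem)
      have eaf := congrArg Prod.fst ea
      have eas := congrArg Prod.snd ea
      rcases mem_hLU' hB hmem with ⟨b, hbLU, eb⟩ | ⟨b, hbLU, eb⟩
      · obtain ⟨hbc, hb1, hb2, eb2, rb1, rb2, hbcase⟩ := psiF hB hbLU
        have ebf := congrArg Prod.fst eb
        have ebs := congrArg Prod.snd eb
        simp only at ebf ebs
        rcases hacase with h|h <;> rcases hbcase with h'|h' <;> omega
      · obtain ⟨hbc, hb1, hb2, eb2, rb1, rb2, hbcase⟩ := psiF hB hbLU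
        have ebf := congrArg Prod.fst eb
        have ebs := congrArg Prod.snd eb
        simp only at ebf ebs
        have hb1a : b.1 = a.1 := by
          rcases hacase with h|h <;> rcases hbcase with h'|h' <;> omega
        have hlt : a.2 < b.2 := by omega
        apply hB.2.2.2.1 a haLmem b.2 hlt
        have : (a.1, b.2) = b := by rw [← hb1a]
        rw [this]; exact hbLU

end Bwd2
end SymATB

namespace SymATB

lemma rfl2_invol {n : ℕ} {p : ℕ × ℕ} (h1 : p.1 ≤ 2*n+1) (h2 : p.2 ≤ 2*n+1) :
    rfl2 n (rfl2 n p) = p := by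
  obtain ⟨a, b⟩ := p
  simp only [rfl2, Prod.mk.injEq] at *
  omega

section Bwd3
variable {n : ℕ} {C' : Finset ℤ} {L' U' : Finset (ℤ × ℤ)}
  (hB : IsATB n C' L' U')

include hB in
theorem hmap_isSym :
    IsSymAT n (hmap n (C', L', U')).1 (hmap n (C', L', U')).2.1
      (hmap n (C', L', U')).2.2 := by
  constructor
  · intro k hk
    simp only [Finset.mem_Icc] at hk
    rw [mem_hC, mem_hC]
    by_cases hkn : n+1 ≤ k
    · rw [if_pos hkn, if_neg (by omega)]
      have e : (n:ℤ) + 1 - ((2*n+1-k : ℕ) : ℤ) = (k:ℤ) - n := by omega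
      rw [e]
      constructor
      · rintro ⟨_, _, h⟩ hcon
        exact hcon.2.2 h
      · intro h
        refine ⟨by omega, by omega, ?_⟩
        by_contra hcon
        exact h ⟨by omega, by omega, hcon⟩
    · rw [if_neg hkn, if_pos (by omega)]
      have e : ((2*n+1-k : ℕ) : ℤ) - n = (n:ℤ) + 1 - k := by omega
      rw [e]
      constructor
      · rintro ⟨_, _, h⟩ ⟨_, _, h2⟩
        exact h h2
      · intro hR
        exact ⟨by omega, by omega, fun hmem => hR ⟨by omega, by omega, hmem⟩⟩
  · intro r c
    rw [mem_hL, mem_hU]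
    constructor
    · rintro (⟨q, hq, e⟩ | ⟨q, hq, e⟩)
      · right
        exact ⟨q, hq, by rw [e]; rfl⟩
      · left
        refine ⟨q, hq, ?_⟩
        obtain ⟨_, h1, h2, e2, r1, r2, hcase⟩ := psiF hB (Finset.mem_union_right _ hq)
        have ef := congrArg Prod.fst e
        have es := congrArg Prod.snd e
        have hb1 : 1 ≤ (psi n q).1 ∧ (psi n q).1 ≤ 2*n := by
          rcases hcase with h|h <;> omega
        have g1 : (psi n q).1 = 2*n+1-c := by omega
        have g2 : (psi n q).2 = 2*n+1-r := by omega
        calc psi n q = ((psi n q).1, (psi n q).2) := rfl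
        _ = (2*n+1-c, 2*n+1-r) := by rw [g1, g2]
    · rintro (⟨q, hq, e⟩ | ⟨q, hq, e⟩)
      · right
        refine ⟨q, hq, ?_⟩
        obtain ⟨_, h1, h2, e2, r1, r2, hcase⟩ := psiF hB (Finset.mem_union_right _ hq)
        have ef := congrArg Prod.fst e
        have es := congrArg Prod.snd e
        have hb1 : 1 ≤ (psi n q).1 ∧ (psi n q).1 ≤ 2*n := by
          rcases hcase with h|h <;> omega
        have g1 : 2*n+1-(psi n q).2 = r := by omega
        have g2 : 2*n+1-(psi n q).1 = c := by omega
        calc rfl2 n (psi n q) = (2*n+1-(psi n q).2, 2*n+1-(psi n q).1) := rfl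
        _ = (r, c) := by rw [g1, g2]
      · left
        refine ⟨q, hq, ?_⟩
        obtain ⟨_, h1, h2, e2, r1, r2, hcase⟩ := psiF hB (Finset.mem_union_left _ hq)
        have ef := congrArg Prod.fst e
        have es := congrArg Prod.snd e
        have hb1 : 1 ≤ (psi n q).1 ∧ (psi n q).1 ≤ 2*n := by
          rcases hcase with h|h <;> omega
        have g1 : (psi n q).1 = r := by
          simp only [rfl2] at es
          omega
        have g2 : (psi n q).2 = c := by
          simp only [rfl2] at ef
          omega
        calc psi n q = ((psi n q).1, (psi n q).2) := rfl
        _ = (r, c) := by rw [g1, g2]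

include hB in
theorem hmap_ranges :
    (hmap n (C', L', U')).1 ⊆ Finset.Icc 1 (2*n) ∧
    (hmap n (C', L', U')).2.1 ⊆ Finset.Icc 1 (2*n) ×ˢ Finset.Icc 1 (2*n) ∧
    (hmap n (C', L', U')).2.2 ⊆ Finset.Icc 1 (2*n) ×ˢ Finset.Icc 1 (2*n) := by
  have key : ∀ p : ℕ × ℕ, p ∈ (hmap n (C', L', U')).2.1 ∪ (hmap n (C', L', U')).2.2 →
      p ∈ Finset.Icc 1 (2*n) ×ˢ Finset.Icc 1 (2*n) := by
    intro p hp
    simp only [Finset.mem_product, Finset.mem_Icc]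
    rcases mem_hLU' hB hp with ⟨b, hbLU, eb⟩ | ⟨b, hbLU, eb⟩ <;>
    · obtain ⟨_, h1, h2, e2, r1, r2, hcase⟩ := psiF hB hbLU
      have ef := congrArg Prod.fst eb
      have es := congrArg Prod.snd eb
      rcases hcase with h|h <;> (constructor <;> constructor <;> omega)
  refine ⟨?_, ?_, ?_⟩
  · intro c hc
    have := mem_hC.1 hc
    simp only [Finset.mem_Icc]; omega
  · intro p hp; exact key p (Finset.mem_union_left _ hp)
  · intro p hp; exact key p (Finset.mem_union_right _ hp)

end Bwd3
end SymATB

namespace SymATB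
section Inv
variable {n : ℕ}

theorem hg_id {C : Finset ℕ} {L U : Finset (ℕ × ℕ)}
    (hA : IsAT (2*n) C L U) (hS : IsSymAT n C L U) :
    hmap n (gmap n (C, L, U)) = (C, L, U) := by
  have hCmp : (hmap n (gmap n (C, L, U))).1 = C := by
    ext c
    rw [mem_hC]
    constructor
    · rintro ⟨h1, h2, hcond⟩
      by_cases hkn : n+1 ≤ c
      · rw [if_pos hkn] at hcond
        obtain ⟨c₀, hc₀, hle, he⟩ := mem_gC.1 hcond
        have : c₀ = c := by omega
        rwa [← this]
      · rw [if_neg hkn] at hcond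
        by_contra hcon
        apply hcond
        have h2n : 2*n+1-c ∈ C := (hS.1 c (Finset.mem_Icc.2 ⟨h1, h2⟩)).not_left.1
          (by simpa using hcon)
        exact mem_gC.2 ⟨2*n+1-c, h2n, by omega, by omega⟩
    · intro hc
      have hb := hA.1 hc
      simp only [Finset.mem_Icc] at hb
      refine ⟨hb.1, hb.2, ?_⟩
      by_cases hkn : n+1 ≤ c
      · rw [if_pos hkn]
        exact mem_gC.2 ⟨c, hc, hkn, rfl⟩
      · rw [if_neg hkn]
        intro hmem
        obtain ⟨c₀, hc₀, hle, he⟩ := mem_gC.1 hmem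
        have : c₀ = 2*n+1-c := by omega
        rw [this] at hc₀
        exact ((hS.1 c (Finset.mem_Icc.2 hb)).1 hc) hc₀
  have hLmp : (hmap n (gmap n (C, L, U))).2.1 = L := by
    ext p
    rw [mem_hL]
    constructor
    · rintro (⟨q, hq, e⟩ | ⟨q, hq, e⟩)
      · obtain ⟨a, haL, hk, hphi⟩ := mem_gL.1 hq
        rw [← hphi, psi_phi] at e
        rwa [← e]
      · obtain ⟨a, haU, hk, hphi⟩ := mem_gU.1 hq
        rw [← hphi, psi_phi] at e
        have := symUL hA hS (r := a.1) (c := a.2) (by rwa [Prod.mk.eta])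
        rw [← rfl2_def, e] at this
        exact this
    · intro hp
      rcases kept_or_deleted hA hS (Finset.mem_union_left _ hp) with hk | hd
      · exact Or.inl ⟨phi n p, mem_gL.2 ⟨p, hp, hk, rfl⟩, psi_phi n p⟩
      · obtain ⟨f1, f2, f3, f4, f5, f6, f7⟩ := cellFacts hA (Finset.mem_union_left _ hp)
        refine Or.inr ⟨phi n (rfl2 n p), mem_gU.2 ⟨rfl2 n p, ?_, ?_, rfl⟩, ?_⟩
        · have := symLU hA hS (r := p.1) (c := p.2) (by rwa [Prod.mk.eta])
          rw [← rfl2_def] at this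
          exact this
        · simp only [rfl2]; omega
        · rw [psi_phi]
          exact rfl2_invol (by omega) (by omega)
  have hUmp : (hmap n (gmap n (C, L, U))).2.2 = U := by
    ext p
    rw [mem_hU]
    constructor
    · rintro (⟨q, hq, e⟩ | ⟨q, hq, e⟩)
      · obtain ⟨a, haU, hk, hphi⟩ := mem_gU.1 hq
        rw [← hphi, psi_phi] at e
        rwa [← e]
      · obtain ⟨a, haL, hk, hphi⟩ := mem_gL.1 hq
        rw [← hphi, psi_phi] at e
        have := symLU hA hS (r := a.1) (c := a.2) (by rwa [Prod.mk.eta])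
        rw [← rfl2_def, e] at this
        exact this
    · intro hp
      rcases kept_or_deleted hA hS (Finset.mem_union_right _ hp) with hk | hd
      · exact Or.inl ⟨phi n p, mem_gU.2 ⟨p, hp, hk, rfl⟩, psi_phi n p⟩
      · obtain ⟨f1, f2, f3, f4, f5, f6, f7⟩ := cellFacts hA (Finset.mem_union_right _ hp)
        refine Or.inr ⟨phi n (rfl2 n p), mem_gL.2 ⟨rfl2 n p, ?_, ?_, rfl⟩, ?_⟩
        · have := symUL hA hS (r := p.1) (c := p.2) (by rwa [Prod.mk.eta])
          rw [← rfl2_def] at this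
          exact this
        · simp only [rfl2]; omega
        · rw [psi_phi]
          exact rfl2_invol (by omega) (by omega)
  exact Prod.ext hCmp (Prod.ext hLmp hUmp)

theorem gh_id {C' : Finset ℤ} {L' U' : Finset (ℤ × ℤ)} (hB : IsATB n C' L' U') :
    gmap n (hmap n (C', L', U')) = (C', L', U') := by
  have hCmp : (gmap n (hmap n (C', L', U'))).1 = C' := by
    ext c'
    rw [mem_gC]
    constructor
    · rintro ⟨c, hc, hle, he⟩
      obtain ⟨_, _, hcond⟩ := mem_hC.1 hc
      rw [if_pos hle] at hcond
      rwa [he] at hcond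
    · intro hc'
      have hb := hB.1 hc'
      simp only [Finset.mem_Icc] at hb
      refine ⟨(c' + n).toNat, ?_, by omega, by omega⟩
      rw [mem_hC]
      refine ⟨by omega, by omega, ?_⟩
      rw [if_pos (by omega)]
      have e : (((c'+n).toNat : ℕ) : ℤ) - n = c' := by omega
      rwa [e]
  have hLmp : (gmap n (hmap n (C', L', U'))).2.1 = L' := by
    ext q
    rw [mem_gL]
    constructor
    · rintro ⟨p, hp, hk, he⟩
      rcases mem_hL.1 hp with ⟨b, hb, e⟩ | ⟨b, hb, e⟩
      · obtain ⟨_, h1, h2, _, _, _, hcase⟩ := psiF hB (Finset.mem_union_left _ hb)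
        have pb : phi n (psi n b) = b :=
          phi_psi n b (by rcases hcase with h|h <;> omega)
            (by rcases hcase with h|h <;> omega) (by omega)
        rw [← e, pb] at he
        rwa [← he]
      · obtain ⟨_, h1, h2, e2, r1, r2, hcase⟩ := psiF hB (Finset.mem_union_right _ hb)
        have ef := congrArg Prod.fst e
        have es := congrArg Prod.snd e
        rcases hcase with h|h <;> omega
    · intro hq
      obtain ⟨_, h1, h2, e2, r1, r2, hcase⟩ := psiF hB (Finset.mem_union_left _ hq)
      refine ⟨psi n q, mem_hL.2 (Or.inl ⟨q, hq, rfl⟩), ?_, ?_⟩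
      · rcases hcase with h|h <;> omega
      · exact phi_psi n q (by rcases hcase with h|h <;> omega)
          (by rcases hcase with h|h <;> omega) (by omega)
  have hUmp : (gmap n (hmap n (C', L', U'))).2.2 = U' := by
    ext q
    rw [mem_gU]
    constructor
    · rintro ⟨p, hp, hk, he⟩
      rcases mem_hU.1 hp with ⟨b, hb, e⟩ | ⟨b, hb, e⟩
      · obtain ⟨_, h1, h2, _, _, _, hcase⟩ := psiF hB (Finset.mem_union_right _ hb)
        have pb : phi n (psi n b) = b :=
          phi_psi n b (by rcases hcase with h|h <;> omega)
            (by rcases hcase with h|h <;> omega) (by omega)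
        rw [← e, pb] at he
        rwa [← he]
      · obtain ⟨_, h1, h2, e2, r1, r2, hcase⟩ := psiF hB (Finset.mem_union_left _ hb)
        have ef := congrArg Prod.fst e
        have es := congrArg Prod.snd e
        rcases hcase with h|h <;> omega
    · intro hq
      obtain ⟨_, h1, h2, e2, r1, r2, hcase⟩ := psiF hB (Finset.mem_union_right _ hq)
      refine ⟨psi n q, mem_hU.2 (Or.inl ⟨q, hq, rfl⟩), ?_, ?_⟩
      · rcases hcase with h|h <;> omega
      · exact phi_psi n q (by rcases hcase with h|h <;> omega)
          (by rcases hcase with h|h <;> omega) (by omega)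
  exact Prod.ext hCmp (Prod.ext hLmp hUmp)

end Inv
end SymATB

namespace SymATB

def rho (n : ℕ) (r : ℕ) : ℤ := if r ≤ n then (r : ℤ) - (n+1) else (r : ℤ) - n
noncomputable def rho' (n : ℕ) (x : ℤ) : ℕ := (if x < 0 then x + (n+1) else x + n).toNat

lemma phi_fst_rho (n : ℕ) (p : ℕ × ℕ) : (phi n p).1 = rho n p.1 := rfl

section Stats
variable {n : ℕ} {C : Finset ℕ} {L U : Finset (ℕ × ℕ)}
  (hA : IsAT (2*n) C L U) (hS : IsSymAT n C L U)

include hA hS in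
theorem urr_eq :
    urrB n (gmap n (C, L, U)).1 (gmap n (C, L, U)).2.1 (gmap n (C, L, U)).2.2
      = urrA (2*n) C L := by
  rw [urrB, urrA]
  apply Finset.card_bij' (fun x _ => rho' n x) (fun r _ => rho n r)
  · -- maps B-side to A-side
    intro x hx
    rw [Finset.mem_filter] at hx ⊢
    obtain ⟨hrows, hnoL, hnoU⟩ := hx
    rw [rowsB, Finset.mem_union] at hrows
    rcases hrows with hpos | hneg
    · rw [Finset.mem_sdiff, Finset.mem_Icc] at hpos
      obtain ⟨⟨hx1, hx2⟩, hxC⟩ := hpos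
      have hix : (rho' n x : ℤ) = x + n := by
        simp only [rho']; rw [if_neg (by omega)]; omega
      constructor
      · rw [Finset.mem_sdiff, Finset.mem_Icc]
        refine ⟨⟨by omega, by omega⟩, ?_⟩
        intro hmem
        exact hxC (mem_gC.2 ⟨rho' n x, hmem, by omega, by omega⟩)
      · intro p hp heq
        obtain ⟨f1, f2, f3, f4, f5, f6, f7⟩ := cellFacts hA (Finset.mem_union_left _ hp)
        have hkept : 2*n+2 ≤ p.1 + p.2 := by omega
        apply hnoL (phi n p) (mem_gL.2 ⟨p, hp, hkept, rfl⟩)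
        rw [phi_fst, if_neg (by omega)]
        omega
    · rw [Finset.mem_image] at hneg
      obtain ⟨c', hc', hcx⟩ := hneg
      obtain ⟨c, hcC, hcn, hce⟩ := mem_gC.1 hc'
      have hcb : 1 ≤ c ∧ c ≤ 2*n := by
        have := hA.1 hcC; simp only [Finset.mem_Icc] at this; exact this
      have hix : (rho' n x : ℤ) = 2*n+1-c := by
        simp only [rho']; rw [if_pos (by omega)]; omega
      constructor
      · rw [Finset.mem_sdiff, Finset.mem_Icc]
        refine ⟨⟨by omega, by omega⟩, ?_⟩
        intro hmem
        apply (hS.1 (rho' n x) (Finset.mem_Icc.2 ⟨by omega, by omega⟩)).1 hmem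
        have e : 2*n+1 - rho' n x = c := by omega
        rw [e]; exact hcC
      · intro p hp heq
        obtain ⟨f1, f2, f3, f4, f5, f6, f7⟩ := cellFacts hA (Finset.mem_union_left _ hp)
        rcases kept_or_deleted hA hS (Finset.mem_union_left _ hp) with hk | hd
        · apply hnoL (phi n p) (mem_gL.2 ⟨p, hp, hk, rfl⟩)
          rw [phi_fst, if_pos (by omega)]
          omega
        · have href := symLU hA hS (r := p.1) (c := p.2) (by rwa [Prod.mk.eta])
          have hrk : 2*n+2 ≤ (2*n+1-p.2) + (2*n+1-p.1) := by omega
          apply hnoU (phi n (2*n+1-p.2, 2*n+1-p.1)) (mem_gU.2 ⟨_, href, hrk, rfl⟩)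
          rw [phi_snd]
          have habs : |x| = (c : ℤ) - n := by rw [abs_of_neg (by omega)]; omega
          rw [habs]
          simp only
          omega
  · -- maps A-side to B-side
    intro r hr
    rw [Finset.mem_filter] at hr ⊢
    obtain ⟨hrIcc, hnoL⟩ := hr
    rw [Finset.mem_sdiff, Finset.mem_Icc] at hrIcc
    obtain ⟨⟨hr1, hr2⟩, hrC⟩ := hrIcc
    refine ⟨?_, ?_, ?_⟩
    · rw [rowsB, Finset.mem_union]
      by_cases hrn : r ≤ n
      · right
        rw [Finset.mem_image]
        refine ⟨(n:ℤ)+1-r, ?_, ?_⟩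
        · refine mem_gC.2 ⟨2*n+1-r, ?_, by omega, by omega⟩
          exact (hS.1 r (Finset.mem_Icc.2 ⟨hr1, hr2⟩)).not_left.1 hrC
        · simp only [rho]; rw [if_pos hrn]; omega
      · left
        rw [Finset.mem_sdiff, Finset.mem_Icc]
        have he : rho n r = (r:ℤ) - n := by simp only [rho]; rw [if_neg hrn]
        refine ⟨⟨by omega, by omega⟩, ?_⟩
        intro hmem
        obtain ⟨c, hcC, hcn, hce⟩ := mem_gC.1 hmem
        have : c = r := by omega
        exact hrC (this ▸ hcC)
    · intro q hq heq
      obtain ⟨p, hpL, hk, hphi⟩ := mem_gL.1 hq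
      have hp1 : p.1 = r := by
        apply phi_fst_inj (n := n) (q := (r, 0))
        rw [hphi, phi_fst_rho]
        exact heq
      exact hnoL p hpL hp1
    · intro q hq heq
      obtain ⟨p, hpU, hk, hphi⟩ := mem_gU.1 hq
      obtain ⟨f1, f2, f3, f4, f5, f6, f7⟩ := cellFacts hA (Finset.mem_union_right _ hpU)
      have hq2 : q.2 = (p.2 : ℤ) - n := by rw [← hphi, phi_snd]
      by_cases hrn : r ≤ n
      · have habs : |rho n r| = (n:ℤ)+1-r := by
          simp only [rho]; rw [if_pos hrn, abs_of_neg (by omega)]; omega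
        rw [habs] at heq
        have hp2 : p.2 = 2*n+1-r := by omega
        have href := symUL hA hS (r := p.1) (c := p.2) (by rwa [Prod.mk.eta])
        have e : 2*n+1-p.2 = r := by omega
        rw [e] at href
        exact hnoL _ href rfl
      · have habs : |rho n r| = (r:ℤ) - n := by
          simp only [rho]; rw [if_neg hrn, abs_of_nonneg (by omega)]
        rw [habs] at heq
        have hp2 : p.2 = r := by omega
        exact hrC (hp2 ▸ f4)
  · -- left inverse
    intro x hx
    rw [Finset.mem_filter] at hx
    have hb : (1 ≤ x ∧ x ≤ n) ∨ (-(n:ℤ) ≤ x ∧ x ≤ -1) := by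
      obtain ⟨hrows, -⟩ := hx
      rw [rowsB, Finset.mem_union] at hrows
      rcases hrows with h | h
      · rw [Finset.mem_sdiff, Finset.mem_Icc] at h
        left; exact h.1
      · rw [Finset.mem_image] at h
        obtain ⟨c', hc', he⟩ := h
        obtain ⟨c, hcC, hcn, hce⟩ := mem_gC.1 hc'
        have := hA.1 hcC
        simp only [Finset.mem_Icc] at this
        right; omega
    simp only [rho, rho']
    split_ifs <;> omega
  · -- right inverse
    intro r hr
    rw [Finset.mem_filter, Finset.mem_sdiff, Finset.mem_Icc] at hr
    simp only [rho, rho']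
    split_ifs <;> omega

end Stats
end SymATB

namespace SymATB

lemma mem_cornersB_iff {n : ℕ} {C' : Finset ℤ} (hC' : C' ⊆ Finset.Icc 1 (n:ℤ))
    (hn : 1 ≤ n) {q : ℤ × ℤ} :
    q ∈ cornersB n C' ↔ q.2 ∈ C' ∧
      ((q.1 = q.2 - 1 ∧ 2 ≤ q.2 ∧ q.2 - 1 ∉ C') ∨ (q.1 = -1 ∧ q.2 = 1)) := by
  constructor
  · intro hq
    rw [cornersB, Finset.mem_filter] at hq
    obtain ⟨hrange, hcell, hbelow, hright⟩ := hq
    obtain ⟨hc2, hcase⟩ := hcell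
    have hc2b := hC' hc2
    simp only [Finset.mem_Icc] at hc2b
    refine ⟨hc2, ?_⟩
    rcases hcase with ⟨g1, g2, g3, g4⟩ | ⟨g1, g2, g3⟩
    · left
      have heq : q.1 = q.2 - 1 := by
        by_contra hne
        by_cases hm : q.2 - 1 ∈ C'
        · exact hright (q.2-1) (by omega)
            ⟨hm, Or.inl ⟨by omega, by omega, g3, by omega⟩⟩
        · exact hbelow (q.2-1) (by omega)
            ⟨hc2, Or.inl ⟨by omega, by omega, hm, by omega⟩⟩
      exact ⟨heq, by omega, by rw [← heq]; exact g3⟩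
    · right
      have hb2 := hC' g2
      simp only [Finset.mem_Icc] at hb2
      have h1 : q.1 = -1 := by
        by_contra hne
        by_cases hm : -q.1 - 1 ∈ C'
        · exact hbelow (q.1+1) (by omega)
            ⟨hc2, Or.inr ⟨by omega,
              by rw [show -(q.1+1) = -q.1-1 from by ring]; exact hm, by omega⟩⟩
        · exact hbelow (-q.1-1) (by omega)
            ⟨hc2, Or.inl ⟨by omega, by omega, hm, by omega⟩⟩
      have h2 : q.2 = 1 := by
        by_contra hne
        by_cases hm : (1:ℤ) ∈ C'
        · exact hright 1 (by omega)
            ⟨hm, Or.inr ⟨by omega, by rw [h1]; simpa using hm, by omega⟩⟩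
        · exact hbelow 1 (by omega)
            ⟨hc2, Or.inl ⟨le_refl 1, by omega, hm, by omega⟩⟩
      exact ⟨h1, h2⟩
  · rintro ⟨hc2, hcase⟩
    have hc2b := hC' hc2
    simp only [Finset.mem_Icc] at hc2b
    rw [cornersB, Finset.mem_filter]
    rcases hcase with ⟨g1, g2, g3⟩ | ⟨g1, g2⟩
    · refine ⟨?_, ⟨hc2, Or.inl ⟨by omega, by omega, by rw [g1]; exact g3, by omega⟩⟩,
        ?_, ?_⟩
      · simp only [Finset.mem_product, Finset.mem_Icc]
        constructor <;> constructor <;> omega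
      · intro x' hx' hcell
        obtain ⟨-, hcc⟩ := hcell
        rcases hcc with ⟨a1, a2, a3, a4⟩ | ⟨a1, a2, a3⟩ <;> omega
      · intro c' hc' hcell
        obtain ⟨-, hcc⟩ := hcell
        rcases hcc with ⟨a1, a2, a3, a4⟩ | ⟨a1, a2, a3⟩ <;> omega
    · refine ⟨?_, ⟨hc2, Or.inr ⟨by omega, ?_, by omega⟩⟩, ?_, ?_⟩
      · simp only [Finset.mem_product, Finset.mem_Icc]
        constructor <;> constructor <;> omega
      · have e : -q.1 = q.2 := by omega
        rw [e]; exact hc2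
      · intro x' hx' hcell
        obtain ⟨-, hcc⟩ := hcell
        rcases hcc with ⟨a1, a2, a3, a4⟩ | ⟨a1, a2, a3⟩ <;> omega
      · intro c' hc' hcell
        obtain ⟨hin, -⟩ := hcell
        have := hC' hin
        simp only [Finset.mem_Icc] at this
        omega

end SymATB

namespace SymATB
section Noc
variable {n : ℕ} {C : Finset ℕ} {L U : Finset (ℕ × ℕ)}
  (hA : IsAT (2*n) C L U) (hS : IsSymAT n C L U)

include hA hS in
theorem noc_eq (hn : 1 ≤ n) :
    nocA (2*n) C L U =
      nocDiagB n (gmap n (C, L, U)).1 (gmap n (C, L, U)).2.1 (gmap n (C, L, U)).2.2 +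
      2 * nocOffB n (gmap n (C, L, U)).1 (gmap n (C, L, U)).2.1 (gmap n (C, L, U)).2.2 := by
  have hgC : (gmap n (C, L, U)).1 ⊆ Finset.Icc 1 (n:ℤ) := (gmap_isATB hA hS).1
  have hCb : ∀ c ∈ C, 1 ≤ c ∧ c ≤ 2*n := by
    intro c hc; have := hA.1 hc; simp only [Finset.mem_Icc] at this; exact this
  set S0 := C.filter (fun c => c - 1 ∈ Finset.Icc 1 (2*n) \ C ∧ (c - 1, c) ∉ L ∪ U)
    with hS0
  -- membership in S0 unfolded
  have memS0 : ∀ c : ℕ, c ∈ S0 ↔ c ∈ C ∧ 2 ≤ c ∧ c - 1 ≤ 2*n ∧ c - 1 ∉ C ∧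
      (c - 1, c) ∉ L ∪ U := by
    intro c
    rw [hS0, Finset.mem_filter, Finset.mem_sdiff, Finset.mem_Icc]
    constructor
    · rintro ⟨h1, ⟨⟨h2, h3⟩, h4⟩, h5⟩
      exact ⟨h1, by omega, h3, h4, h5⟩
    · rintro ⟨h1, h2, h3, h4, h5⟩
      exact ⟨h1, ⟨⟨by omega, h3⟩, h4⟩, h5⟩
  -- the diagonal part
  have hdiagset : (cornersB n (gmap n (C, L, U)).1).filter
      (fun p => p.1 = -p.2 ∧ p ∉ (gmap n (C, L, U)).2.1 ∪ (gmap n (C, L, U)).2.2)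
      = if n+1 ∈ C then {((-1:ℤ), (1:ℤ))} else ∅ := by
    ext q
    rw [Finset.mem_filter, mem_cornersB_iff hgC hn]
    constructor
    · rintro ⟨⟨hc2, hcase⟩, hdiag, hnot⟩
      rcases hcase with ⟨g1, g2, g3⟩ | ⟨g1, g2⟩
      · omega
      · have h1g : (1:ℤ) ∈ (gmap n (C, L, U)).1 := by rw [← g2]; exact hc2
        obtain ⟨c, hcC, hcn, hce⟩ := mem_gC.1 h1g
        have hc : c = n+1 := by omega
        rw [if_pos (hc ▸ hcC), Finset.mem_singleton]
        exact Prod.ext g1 g2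
    · intro hq
      by_cases hn1 : n+1 ∈ C
      · rw [if_pos hn1, Finset.mem_singleton] at hq
        subst hq
        have h1g : (1:ℤ) ∈ (gmap n (C, L, U)).1 :=
          mem_gC.2 ⟨n+1, hn1, le_refl _, by push_cast; ring⟩
        refine ⟨⟨h1g, Or.inr ⟨rfl, rfl⟩⟩, by norm_num, ?_⟩
        intro hmem
        obtain ⟨p, hp, hk, hphi⟩ := mem_gLU hA hmem
        have e2 : (p.2:ℤ) - n = 1 := by rw [← phi_snd, hphi]
        have e1 : (phi n p).1 = -1 := by rw [hphi]
        have hle : p.1 ≤ n := by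
          by_contra hc
          rw [phi_fst, if_neg hc] at e1
          omega
        rw [phi_fst, if_pos hle] at e1
        omega
      · rw [if_neg hn1] at hq
        exact absurd hq (Finset.notMem_empty _)
  have hdiagcard : nocDiagB n (gmap n (C, L, U)).1 (gmap n (C, L, U)).2.1
      (gmap n (C, L, U)).2.2 = if n+1 ∈ C then 1 else 0 := by
    rw [nocDiagB, hdiagset]
    split_ifs <;> simp
  -- the diagonal part of S0
  have hAdiag : ((S0.filter (fun c => ¬ c ≤ n)).filter (fun c => c = n+1))
      = if n+1 ∈ C then {n+1} else ∅ := by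
    ext c
    rw [Finset.mem_filter, Finset.mem_filter, memS0]
    constructor
    · rintro ⟨⟨⟨h1, -⟩, -⟩, h2⟩
      subst h2
      rw [if_pos h1, Finset.mem_singleton]
    · intro hc
      by_cases hn1 : n+1 ∈ C
      · rw [if_pos hn1, Finset.mem_singleton] at hc
        subst hc
        have hnC : n ∉ C := by
          intro h
          have := (hS.1 n (Finset.mem_Icc.2 ⟨hn, by omega⟩)).1 h
          apply this
          have e : 2*n+1-n = n+1 := by omega
          rw [e]; exact hn1
        refine ⟨⟨⟨hn1, by omega, by omega, ?_, ?_⟩, by omega⟩, rfl⟩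
        · have e : n+1-1 = n := by omega
          rw [e]; exact hnC
        · intro hmem
          have e : n+1-1 = n := by omega
          rw [e] at hmem
          exact diag_empty hA hS hmem (by simp; omega)
      · rw [if_neg hn1] at hc
        exact absurd hc (Finset.notMem_empty _)
  have hAdiagcard : ((S0.filter (fun c => ¬ c ≤ n)).filter (fun c => c = n+1)).card
      = if n+1 ∈ C then 1 else 0 := by
    rw [hAdiag]; split_ifs <;> simp
  -- the low (strictly-below-diagonal) part ↔ off-diagonal corners
  have hlow : ((S0.filter (fun c => ¬ c ≤ n)).filter (fun c => ¬ c = n+1)).card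
      = nocOffB n (gmap n (C, L, U)).1 (gmap n (C, L, U)).2.1 (gmap n (C, L, U)).2.2 := by
    rw [nocOffB]
    refine Finset.card_bij' (fun c _ => ((c:ℤ)-n-1, (c:ℤ)-n))
      (fun q _ => (q.2+n).toNat) ?_ ?_ ?_ ?_
    · intro c hc
      beta_reduce
      rw [Finset.mem_filter, Finset.mem_filter, memS0] at hc
      obtain ⟨⟨⟨h1, h2, h3, h4, h5⟩, h6⟩, h7⟩ := hc
      have hcb := hCb c h1
      rw [Finset.mem_filter, mem_cornersB_iff hgC hn]
      refine ⟨⟨mem_gC.2 ⟨c, h1, by omega, rfl⟩, Or.inl ⟨by ring, by omega, ?_⟩⟩,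
        by omega, ?_⟩
      · intro hmem
        obtain ⟨c₀, hc₀, hcn, hce⟩ := mem_gC.1 hmem
        have e : c₀ = c - 1 := by omega
        exact h4 (e ▸ hc₀)
      · intro hmem
        obtain ⟨p, hp, hk, hphi⟩ := mem_gLU hA hmem
        have e2 : (p.2:ℤ) - n = (c:ℤ) - n := by rw [← phi_snd, hphi]
        have e1 : (phi n p).1 = (c:ℤ)-n-1 := by rw [hphi]
        have hgt : ¬ p.1 ≤ n := by
          intro hle
          rw [phi_fst, if_pos hle] at e1
          omega
        rw [phi_fst, if_neg hgt] at e1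
        have : p = (c-1, c) := Prod.ext (by omega) (by omega)
        rw [this] at hp
        exact h5 hp
    · intro q hq
      beta_reduce
      rw [Finset.mem_filter, mem_cornersB_iff hgC hn] at hq
      obtain ⟨⟨hc2, hcase⟩, hne, hnot⟩ := hq
      rcases hcase with ⟨g1, g2, g3⟩ | ⟨g1, g2⟩
      swap
      · omega
      obtain ⟨c₀, hc₀, hcn, hce⟩ := mem_gC.1 hc2
      have hcb := hCb c₀ hc₀
      have hc₀v : ((q.2+n).toNat : ℤ) = c₀ := by omega
      rw [Finset.mem_filter, Finset.mem_filter, memS0]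
      have hcc : (q.2+n).toNat = c₀ := by omega
      rw [hcc]
      refine ⟨⟨⟨hc₀, by omega, by omega, ?_, ?_⟩, by omega⟩, by omega⟩
      · intro hmem
        apply g3
        exact mem_gC.2 ⟨c₀-1, hmem, by omega, by omega⟩
      · intro hmem
        apply hnot
        have hk : 2*n+2 ≤ (c₀-1) + c₀ := by omega
        have hphi : phi n (c₀-1, c₀) = q := by
          refine Prod.ext ?_ ?_
          · rw [phi_fst, if_neg (by simp; omega)]
            simp
            omega
          · rw [phi_snd]
            simp
            omega
        rcases Finset.mem_union.1 hmem with h | h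
        · exact Finset.mem_union_left _ (mem_gL.2 ⟨(c₀-1, c₀), h, hk, hphi⟩)
        · exact Finset.mem_union_right _ (mem_gU.2 ⟨(c₀-1, c₀), h, hk, hphi⟩)
    · intro c hc
      beta_reduce
      rw [Finset.mem_filter, Finset.mem_filter, memS0] at hc
      have hcb := hCb c hc.1.1.1
      omega
    · intro q hq
      beta_reduce
      rw [Finset.mem_filter, mem_cornersB_iff hgC hn] at hq
      obtain ⟨⟨hc2, hcase⟩, hne, hnot⟩ := hq
      have hb : 1 ≤ q.2 ∧ q.2 ≤ n := by
        have := hgC hc2; simp only [Finset.mem_Icc] at this; omega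
      rcases hcase with ⟨g1, g2, g3⟩ | ⟨g1, g2⟩
      · exact Prod.ext (by simp; omega) (by simp; omega)
      · omega
  -- the high part ↔ the low part
  have hhigh : (S0.filter (fun c => c ≤ n)).card
      = ((S0.filter (fun c => ¬ c ≤ n)).filter (fun c => ¬ c = n+1)).card := by
    refine Finset.card_bij' (fun c _ => 2*n+2-c) (fun c _ => 2*n+2-c) ?_ ?_ ?_ ?_
    · intro c hc
      beta_reduce
      rw [Finset.mem_filter, memS0] at hc
      obtain ⟨⟨h1, h2, h3, h4, h5⟩, h6⟩ := hc
      have hcb := hCb c h1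
      rw [Finset.mem_filter, Finset.mem_filter, memS0]
      have hrefC : 2*n+2-c ∈ C := by
        have := (hS.1 (c-1) (Finset.mem_Icc.2 ⟨by omega, by omega⟩)).not_left.1 h4
        have e : 2*n+1-(c-1) = 2*n+2-c := by omega
        rwa [e] at this
      have hrefnC : 2*n+2-c-1 ∉ C := by
        have := (hS.1 c (Finset.mem_Icc.2 ⟨by omega, by omega⟩)).1 h1
        have e : 2*n+1-c = 2*n+2-c-1 := by omega
        rwa [e] at this
      refine ⟨⟨⟨hrefC, by omega, by omega, hrefnC, ?_⟩, by omega⟩, by omega⟩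
      intro hmem
      have e1 : 2*n+2-c-1 = 2*n+1-c := by omega
      rw [e1] at hmem
      rcases Finset.mem_union.1 hmem with h | h
      · have := symLU hA hS (r := 2*n+1-c) (c := 2*n+2-c) h
        have e2 : 2*n+1-(2*n+2-c) = c-1 := by omega
        have e3 : 2*n+1-(2*n+1-c) = c := by omega
        rw [e2, e3] at this
        exact h5 (Finset.mem_union_right _ this)
      · have := symUL hA hS (r := 2*n+1-c) (c := 2*n+2-c) h
        have e2 : 2*n+1-(2*n+2-c) = c-1 := by omega
        have e3 : 2*n+1-(2*n+1-c) = c := by omega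
        rw [e2, e3] at this
        exact h5 (Finset.mem_union_left _ this)
    · intro c hc
      beta_reduce
      rw [Finset.mem_filter, Finset.mem_filter, memS0] at hc
      obtain ⟨⟨⟨h1, h2, h3, h4, h5⟩, h6⟩, h7⟩ := hc
      have hcb := hCb c h1
      rw [Finset.mem_filter, memS0]
      have hrefC : 2*n+2-c ∈ C := by
        have := (hS.1 (c-1) (Finset.mem_Icc.2 ⟨by omega, by omega⟩)).not_left.1 h4
        have e : 2*n+1-(c-1) = 2*n+2-c := by omega
        rwa [e] at this
      have hrefnC : 2*n+2-c-1 ∉ C := by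
        have := (hS.1 c (Finset.mem_Icc.2 ⟨by omega, by omega⟩)).1 h1
        have e : 2*n+1-c = 2*n+2-c-1 := by omega
        rwa [e] at this
      refine ⟨⟨hrefC, by omega, by omega, hrefnC, ?_⟩, by omega⟩
      intro hmem
      have e1 : 2*n+2-c-1 = 2*n+1-c := by omega
      rw [e1] at hmem
      rcases Finset.mem_union.1 hmem with h | h
      · have := symLU hA hS (r := 2*n+1-c) (c := 2*n+2-c) h
        have e2 : 2*n+1-(2*n+2-c) = c-1 := by omega
        have e3 : 2*n+1-(2*n+1-c) = c := by omega
        rw [e2, e3] at this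
        exact h5 (Finset.mem_union_right _ this)
      · have := symUL hA hS (r := 2*n+1-c) (c := 2*n+2-c) h
        have e2 : 2*n+1-(2*n+2-c) = c-1 := by omega
        have e3 : 2*n+1-(2*n+1-c) = c := by omega
        rw [e2, e3] at this
        exact h5 (Finset.mem_union_left _ this)
    · intro c hc
      beta_reduce
      rw [Finset.mem_filter, memS0] at hc
      omega
    · intro c hc
      beta_reduce
      rw [Finset.mem_filter, Finset.mem_filter, memS0] at hc
      have hcb := hCb c hc.1.1.1
      omega
  -- assemble
  have hsplit1 := Finset.card_filter_add_card_filter_not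
    (s := S0) (fun c => c ≤ n)
  have hsplit2 := Finset.card_filter_add_card_filter_not
    (s := S0.filter (fun c => ¬ c ≤ n)) (fun c => c = n+1)
  have : nocA (2*n) C L U = S0.card := rfl
  omega

end Noc
end SymATB

namespace SymATB

lemma mem_Sset {n : ℕ} {T : Finset ℕ × Finset (ℕ × ℕ) × Finset (ℕ × ℕ)} :
    T ∈ (ATset (2*n)).filter (fun T => IsSymAT n T.1 T.2.1 T.2.2) ↔
      (T.2.1 ⊆ Finset.Icc 1 (2*n) ×ˢ Finset.Icc 1 (2*n) ∧
       T.2.2 ⊆ Finset.Icc 1 (2*n) ×ˢ Finset.Icc 1 (2*n)) ∧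
      IsAT (2*n) T.1 T.2.1 T.2.2 ∧ IsSymAT n T.1 T.2.1 T.2.2 := by
  rw [Finset.mem_filter, ATset, Finset.mem_filter, Finset.mem_product,
    Finset.mem_product, Finset.mem_powerset, Finset.mem_powerset, Finset.mem_powerset]
  constructor
  · rintro ⟨⟨⟨h1, h2, h3⟩, h4⟩, h5⟩
    exact ⟨⟨h2, h3⟩, h4, h5⟩
  · rintro ⟨⟨h2, h3⟩, h4, h5⟩
    exact ⟨⟨⟨h4.1, h2, h3⟩, h4⟩, h5⟩

lemma mem_ATBset {n : ℕ} {T : Finset ℤ × Finset (ℤ × ℤ) × Finset (ℤ × ℤ)} :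
    T ∈ ATB n ↔
      (T.2.1 ⊆ Finset.Icc (-(n:ℤ)) n ×ˢ Finset.Icc (1:ℤ) n ∧
       T.2.2 ⊆ Finset.Icc (-(n:ℤ)) n ×ˢ Finset.Icc (1:ℤ) n) ∧
      IsATB n T.1 T.2.1 T.2.2 := by
  rw [ATB, Finset.mem_filter, Finset.mem_product, Finset.mem_product,
    Finset.mem_powerset, Finset.mem_powerset, Finset.mem_powerset]
  constructor
  · rintro ⟨⟨h1, h2, h3⟩, h4⟩
    exact ⟨⟨h2, h3⟩, h4⟩
  · rintro ⟨⟨h2, h3⟩, h4⟩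
    exact ⟨⟨h4.1, h2, h3⟩, h4⟩

end SymATB

/-- there is a bijection between symmetric alternative
tableaux of size `2n` and type B alternative tableaux of size `n` which
preserves the number of unrestricted rows and sends the number of
non-occupied corners to `noc' + 2 noc''`. -/
theorem symAT_ATB_bijection (n : ℕ) (hn : 1 ≤ n) :
    ∃ g : Finset ℕ × Finset (ℕ × ℕ) × Finset (ℕ × ℕ) →
        Finset ℤ × Finset (ℤ × ℤ) × Finset (ℤ × ℤ),
      Set.BijOn g
        (((ATset (2 * n)).filter (fun T => IsSymAT n T.1 T.2.1 T.2.2)) : Set _)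
        (ATB n : Set _) ∧
      ∀ T ∈ (ATset (2 * n)).filter (fun T => IsSymAT n T.1 T.2.1 T.2.2),
        urrB n (g T).1 (g T).2.1 (g T).2.2 = urrA (2 * n) T.1 T.2.1 ∧
        nocA (2 * n) T.1 T.2.1 T.2.2 =
          nocDiagB n (g T).1 (g T).2.1 (g T).2.2 +
            2 * nocOffB n (g T).1 (g T).2.1 (g T).2.2 := by
  refine ⟨SymATB.gmap n, ?_, ?_⟩
  · have hmg : Set.MapsTo (SymATB.gmap n)
        (((ATset (2 * n)).filter (fun T => IsSymAT n T.1 T.2.1 T.2.2)) : Set _)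
        (ATB n : Set _) := by
      intro T hT
      replace hT : T ∈ (ATset (2*n)).filter (fun T => IsSymAT n T.1 T.2.1 T.2.2) := hT
      obtain ⟨-, hA, hS⟩ := SymATB.mem_Sset.1 hT
      obtain ⟨r1, r2, r3⟩ := SymATB.gmap_mem_ranges hA hS
      exact SymATB.mem_ATBset.2 ⟨⟨r2, r3⟩, SymATB.gmap_isATB hA hS⟩
    have hmh : Set.MapsTo (SymATB.hmap n) (ATB n : Set _)
        (((ATset (2 * n)).filter (fun T => IsSymAT n T.1 T.2.1 T.2.2)) : Set _) := by
      intro T hT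
      replace hT : T ∈ ATB n := hT
      obtain ⟨-, hB⟩ := SymATB.mem_ATBset.1 hT
      obtain ⟨r1, r2, r3⟩ := SymATB.hmap_ranges hB
      exact SymATB.mem_Sset.2 ⟨⟨r2, r3⟩, SymATB.hmap_isAT hB, SymATB.hmap_isSym hB⟩
    refine Set.InvOn.bijOn ⟨?_, ?_⟩ hmg hmh
    · intro T hT
      replace hT : T ∈ (ATset (2*n)).filter (fun T => IsSymAT n T.1 T.2.1 T.2.2) := hT
      obtain ⟨-, hA, hS⟩ := SymATB.mem_Sset.1 hT
      exact SymATB.hg_id hA hS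
    · intro T hT
      replace hT : T ∈ ATB n := hT
      obtain ⟨-, hB⟩ := SymATB.mem_ATBset.1 hT
      exact SymATB.gh_id hB
  · intro T hT
    obtain ⟨-, hA, hS⟩ := SymATB.mem_Sset.1 hT
    exact ⟨SymATB.urr_eq hA hS, SymATB.noc_eq hA hS hn⟩
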